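/- Point-group correspondence: Let P ∈ ℝ^{d×n} have rank d, no null columns, and no repeated columns. Then there exists a permutation matrix S ≠ I_n with Sᵀ(PᵀηP)S = PᵀηP if and only if there exists O ∈ G_η(d) with O ≠ I_d such that OP = PS for some permutation matrix S. -/

import Mathlib

open Matrix

private lemma pg_cancel {d n : ℕ} {P : Matrix (Fin d) (Fin n) ℝ}
    {R : Matrix (Fin n) (Fin d) ℝ} (hPR : P * R = 1)
    {A B : Matrix (Fin d) (Fin d) ℝ} (h : Pᵀ * A * P = Pᵀ * B * P) : A = B := by
  have hRP : Rᵀ * Pᵀ = 1 := by rw [← transpose_mul, hPR, transpose_one]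
  calc A = Rᵀ * Pᵀ * A * (P * R) := by rw [hRP, hPR, one_mul, mul_one]
    _ = Rᵀ * (Pᵀ * A * P) * R := by simp only [Matrix.mul_assoc]
    _ = Rᵀ * (Pᵀ * B * P) * R := by rw [h]
    _ = Rᵀ * Pᵀ * B * (P * R) := by simp only [Matrix.mul_assoc]
    _ = B := by rw [hRP, hPR, one_mul, mul_one]

private lemma pg_perm_one {n : ℕ} : ((1 : Equiv.Perm (Fin n)).permMatrix ℝ) = 1 := by
  show ((Equiv.refl (Fin n)).toPEquiv.toMatrix : Matrix _ _ ℝ) = 1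
  rw [Equiv.toPEquiv_refl, PEquiv.toMatrix_refl]

private lemma pg_perm_orth {n : ℕ} (σ : Equiv.Perm (Fin n)) :
    σ.permMatrix ℝ * (σ.permMatrix ℝ)ᵀ = 1 ∧ (σ.permMatrix ℝ)ᵀ * σ.permMatrix ℝ = 1 := by
  have h1 : ((σ.permMatrix ℝ))ᵀ = (σ.symm.toPEquiv.toMatrix : Matrix _ _ ℝ) := by
    rw [Equiv.toPEquiv_symm, PEquiv.toMatrix_symm]
  constructor
  · rw [h1]
    show (σ.toPEquiv.toMatrix : Matrix _ _ ℝ) * σ.symm.toPEquiv.toMatrix = 1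
    rw [← PEquiv.toMatrix_trans, ← Equiv.toPEquiv_trans, Equiv.self_trans_symm,
      Equiv.toPEquiv_refl, PEquiv.toMatrix_refl]
  · rw [h1]
    show (σ.symm.toPEquiv.toMatrix : Matrix _ _ ℝ) * σ.toPEquiv.toMatrix = 1
    rw [← PEquiv.toMatrix_trans, ← Equiv.toPEquiv_trans, Equiv.symm_trans_self,
      Equiv.toPEquiv_refl, PEquiv.toMatrix_refl]

private lemma pg_entry {d n : ℕ} (P : Matrix (Fin d) (Fin n) ℝ) (σ : Equiv.Perm (Fin n))
    (k : Fin d) (j : Fin n) : (P * σ.permMatrix ℝ) k j = P k (σ⁻¹ j) := by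
  rw [PEquiv.mul_toMatrix_toPEquiv P σ]; rfl

private lemma pg_ker {d n : ℕ} (η : Matrix (Fin d) (Fin d) ℝ) (hηη : η * η = 1)
    (P Q : Matrix (Fin d) (Fin n) ℝ) (S : Matrix (Fin n) (Fin n) ℝ)
    (hStS : S * Sᵀ = 1) (hQdef : Q = P * S)
    {R : Matrix (Fin n) (Fin d) ℝ} (hRP : Rᵀ * Pᵀ = 1)
    (hQη : Qᵀ * η * Q = Pᵀ * η * P)
    (x : Fin n → ℝ) (hx : P.mulVec x = 0) : Q.mulVec x = 0 := by
  have hGx : (Pᵀ * η * P).mulVec x = 0 := by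
    rw [Matrix.mul_assoc, ← mulVec_mulVec, ← mulVec_mulVec, hx, mulVec_zero, mulVec_zero]
  have h2 : Sᵀ.mulVec (Pᵀ.mulVec (η.mulVec (Q.mulVec x))) = 0 := by
    have h0 : (Qᵀ * η * Q).mulVec x = 0 := by rw [hQη]; exact hGx
    rw [hQdef, transpose_mul, Matrix.mul_assoc, Matrix.mul_assoc, ← mulVec_mulVec,
      ← mulVec_mulVec, ← mulVec_mulVec, ← hQdef] at h0
    exact h0
  have h3 : Pᵀ.mulVec (η.mulVec (Q.mulVec x)) = 0 := by
    have := congrArg (fun v => S.mulVec v) h2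
    simpa only [mulVec_mulVec, ← Matrix.mul_assoc, hStS, one_mul, Matrix.one_mul,
      mulVec_zero] using this
  have h4 : η.mulVec (Q.mulVec x) = 0 := by
    have := congrArg (fun v => Rᵀ.mulVec v) h3
    simpa only [mulVec_mulVec, ← Matrix.mul_assoc, hRP, one_mul, Matrix.one_mul,
      mulVec_zero] using this
  have := congrArg (fun v => η.mulVec v) h4
  simpa only [mulVec_mulVec, ← Matrix.mul_assoc, hηη, one_mul, Matrix.one_mul,
    mulVec_zero] using this

private lemma pg_col {d n : ℕ} (P Q : Matrix (Fin d) (Fin n) ℝ)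
    (N : Matrix (Fin n) (Fin n) ℝ)
    (hker : ∀ x : Fin n → ℝ, P.mulVec x = 0 → Q.mulVec x = 0)
    (hPM : P * N = 0) : Q * N = 0 := by
  ext i j
  have h := hker (fun k => N k j) (by
    funext i'
    have : (P * N) i' j = 0 := by rw [hPM]; rfl
    simpa [Matrix.mulVec, Matrix.mul_apply, dotProduct] using this)
  have : Q.mulVec (fun k => N k j) i = 0 := by rw [h]; rfl
  simpa [Matrix.mulVec, Matrix.mul_apply, dotProduct] using this

/-- Point-group correspondence: a nontrivial permutation stabilizing the Gram
matrix `Pᵀ η P` exists iff a nontrivial `O ∈ G_η(d)` with `O P = P S` exists. -/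
theorem point_group_correspondence {d n : ℕ}
    (η : Matrix (Fin d) (Fin d) ℝ)
    (f : Fin d → ℝ) (hη : η = Matrix.diagonal f) (hf : ∀ i, f i = 1 ∨ f i = -1)
    (P : Matrix (Fin d) (Fin n) ℝ) (hrank : P.rank = d)
    (hnull : ∀ j : Fin n, (Pᵀ * η * P) j j ≠ 0)
    (hnorep : ∀ i j : Fin n, (∀ k : Fin d, P k i = P k j) → i = j) :
    (∃ σ : Equiv.Perm (Fin n), σ.permMatrix ℝ ≠ 1 ∧
        (σ.permMatrix ℝ)ᵀ * (Pᵀ * η * P) * σ.permMatrix ℝ = Pᵀ * η * P) ↔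
      (∃ (O : Matrix (Fin d) (Fin d) ℝ) (σ : Equiv.Perm (Fin n)),
        Oᵀ * η * O = η ∧ O ≠ 1 ∧ O * P = P * σ.permMatrix ℝ) := by
  -- right inverse of `P`
  obtain ⟨R, hPR⟩ : ∃ R : Matrix (Fin n) (Fin d) ℝ, P * R = 1 := by
    have hsurj : LinearMap.range P.mulVecLin = ⊤ := by
      apply Submodule.eq_top_of_finrank_eq
      rw [← Matrix.rank, hrank, Module.finrank_fin_fun]
    obtain ⟨g, hg⟩ := P.mulVecLin.exists_rightInverse_of_surjective hsurj
    refine ⟨LinearMap.toMatrix' g, ?_⟩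
    have h' : Matrix.toLin' P ∘ₗ g = LinearMap.id := hg
    calc P * LinearMap.toMatrix' g
        = LinearMap.toMatrix' (Matrix.toLin' P ∘ₗ g) := by
          rw [LinearMap.toMatrix'_comp, LinearMap.toMatrix'_toLin']
      _ = 1 := by rw [h', LinearMap.toMatrix'_id]
  have hRP : Rᵀ * Pᵀ = 1 := by rw [← transpose_mul, hPR, transpose_one]
  have hηη : η * η = 1 := by
    rw [hη, diagonal_mul_diagonal]
    have hff : (fun i => f i * f i) = fun _ : Fin d => (1 : ℝ) :=
      funext fun i => by rcases hf i with h | h <;> simp [h]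
    rw [hff, Matrix.diagonal_one]
  constructor
  · rintro ⟨σ, hS1, hstab⟩
    have hSSt := (pg_perm_orth σ).1
    have hQη : (P * σ.permMatrix ℝ)ᵀ * η * (P * σ.permMatrix ℝ) = Pᵀ * η * P := by
      calc (P * σ.permMatrix ℝ)ᵀ * η * (P * σ.permMatrix ℝ)
          = (σ.permMatrix ℝ)ᵀ * (Pᵀ * η * P) * σ.permMatrix ℝ := by
            rw [transpose_mul]; simp only [Matrix.mul_assoc]
        _ = Pᵀ * η * P := hstab
    have hker : ∀ x : Fin n → ℝ, P.mulVec x = 0 → (P * σ.permMatrix ℝ).mulVec x = 0 :=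
      fun x hx => pg_ker η hηη P (P * σ.permMatrix ℝ) (σ.permMatrix ℝ) hSSt rfl hRP hQη x hx
    have hM : P * (R * P - 1) = 0 := by
      rw [Matrix.mul_sub, Matrix.mul_one, ← Matrix.mul_assoc, hPR, Matrix.one_mul, sub_self]
    have hQM : (P * σ.permMatrix ℝ) * (R * P - 1) = 0 :=
      pg_col P (P * σ.permMatrix ℝ) (R * P - 1) hker hM
    have hOP : (P * σ.permMatrix ℝ * R) * P = P * σ.permMatrix ℝ := by
      rw [Matrix.mul_sub, Matrix.mul_one, sub_eq_zero] at hQM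
      calc (P * σ.permMatrix ℝ * R) * P
          = (P * σ.permMatrix ℝ) * (R * P) := by rw [Matrix.mul_assoc]
        _ = P * σ.permMatrix ℝ := hQM
    refine ⟨P * σ.permMatrix ℝ * R, σ, ?_, ?_, hOP⟩
    · apply pg_cancel hPR
      have e1 : Pᵀ * ((P * σ.permMatrix ℝ * R)ᵀ * η * (P * σ.permMatrix ℝ * R)) * P
          = ((P * σ.permMatrix ℝ * R) * P)ᵀ * η * ((P * σ.permMatrix ℝ * R) * P) := by
        simp only [transpose_mul, Matrix.mul_assoc]
      rw [e1, hOP, hQη]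
    · intro h
      apply hS1
      have hPS : P * σ.permMatrix ℝ = P := by
        rw [← hOP, h, Matrix.one_mul]
      have hσ : σ = 1 := by
        apply Equiv.ext
        intro j
        have hcol : ∀ k, P k (σ⁻¹ j) = P k j := fun k => by
          calc P k (σ⁻¹ j) = (P * σ.permMatrix ℝ) k j := (pg_entry P σ k j).symm
            _ = P k j := by rw [hPS]
        have hfix : σ⁻¹ j = j := hnorep (σ⁻¹ j) j hcol
        have := congrArg σ hfix
        rw [(Equiv.Perm.inv_eq_iff_eq.mp (rfl : σ⁻¹ j = σ⁻¹ j)).symm] at this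
        exact this.symm
      rw [hσ]
      exact pg_perm_one
  · rintro ⟨O, σ, hOη, hO1, hOPS⟩
    refine ⟨σ, ?_, ?_⟩
    · intro h1
      apply hO1
      rw [h1, Matrix.mul_one] at hOPS
      calc O = O * (P * R) := by rw [hPR, mul_one]
        _ = O * P * R := by rw [Matrix.mul_assoc]
        _ = P * R := by rw [hOPS]
        _ = 1 := hPR
    · calc (σ.permMatrix ℝ)ᵀ * (Pᵀ * η * P) * σ.permMatrix ℝ
          = (P * σ.permMatrix ℝ)ᵀ * η * (P * σ.permMatrix ℝ) := by
            rw [transpose_mul]; simp only [Matrix.mul_assoc]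
        _ = (O * P)ᵀ * η * (O * P) := by rw [hOPS]
        _ = Pᵀ * (Oᵀ * η * O) * P := by rw [transpose_mul]; simp only [Matrix.mul_assoc]
        _ = Pᵀ * η * P := by rw [hOη]
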